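/- Let Y be a real vector space with a Hausdorff locally convex topology, U and V convex subsets of Y with U open and U ∩ V ≠ ∅, and y ∈ V ∩ cl(U). If π is a (not necessarily continuous) linear functional on Y with ⟨π, y⟩ ≤ ⟨π, y'⟩ for all y' ∈ U ∩ V, then there exist linear functionals π₁, π₂ on Y with π = π₁ + π₂, π₁ continuous, ⟨π₁, y⟩ ≤ ⟨π₁, u⟩ for all u ∈ U, and ⟨π₂, y⟩ ≤ ⟨π₂, v⟩ for all v ∈ V. -/

import Mathlib

/-- decomposition of a supporting linear functional into a continuous part
supporting the open convex set `U` and a part supporting the convex set `V`. -/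
theorem supporting_functional_decomposition {Y : Type*} [AddCommGroup Y] [Module ℝ Y]
    [TopologicalSpace Y] [IsTopologicalAddGroup Y] [ContinuousSMul ℝ Y]
    [T2Space Y] [LocallyConvexSpace ℝ Y]
    (U V : Set Y) (hU : Convex ℝ U) (hV : Convex ℝ V) (hUopen : IsOpen U)
    (hUV : (U ∩ V).Nonempty) (y : Y) (hy : y ∈ V ∩ closure U)
    (π : Y →ₗ[ℝ] ℝ) (hπ : ∀ y' ∈ U ∩ V, π y ≤ π y') :
    ∃ π₁ π₂ : Y →ₗ[ℝ] ℝ, Continuous π₁ ∧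
      (∀ u ∈ U, π₁ y ≤ π₁ u) ∧ (∀ v ∈ V, π₂ y ≤ π₂ v) ∧ π = π₁ + π₂ := by
  classical
  set A : Set (Y × ℝ) := U ×ˢ Set.Iio (0 : ℝ) with hA_def
  set B : Set (Y × ℝ) := {p : Y × ℝ | p.1 ∈ V ∧ π p.1 - π y ≤ p.2} with hB_def
  have hAconv : Convex ℝ A := hU.prod (convex_Iio 0)
  have hAopen : IsOpen A := hUopen.prod isOpen_Iio
  have hBconv : Convex ℝ B := by
    rintro ⟨v₁, t₁⟩ ⟨hv₁, ht₁⟩ ⟨v₂, t₂⟩ ⟨hv₂, ht₂⟩ a b ha hb hab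
    refine ⟨hV hv₁ hv₂ ha hb hab, ?_⟩
    simp only [Prod.fst, Prod.snd, Prod.smul_mk, Prod.mk_add_mk, smul_eq_mul] at *
    have : π (a • v₁ + b • v₂) = a * π v₁ + b * π v₂ := by
      simp [map_add, map_smul, smul_eq_mul]
    rw [this]
    have hy' : a * π y + b * π y = π y := by rw [← add_mul, hab, one_mul]
    linarith [mul_le_mul_of_nonneg_left ht₁ ha, mul_le_mul_of_nonneg_left ht₂ hb]
  have hdisj : Disjoint A B := by
    rw [Set.disjoint_left]
    rintro ⟨u, t⟩ ⟨huU, ht⟩ ⟨huV, ht'⟩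
    have := hπ u ⟨huU, huV⟩
    simp only [Set.mem_Iio] at ht
    simp only at ht'
    linarith
  obtain ⟨f, s, hfA, hfB⟩ := geometric_hahn_banach_open hAconv hAopen hBconv hdisj
  set g : Y →L[ℝ] ℝ := f.comp (ContinuousLinearMap.inl ℝ Y ℝ) with hg_def
  set c : ℝ := f (0, 1) with hc_def
  have hf : ∀ (x : Y) (t : ℝ), f (x, t) = g x + c * t := by
    intro x t
    have hx : (x, t) = (x, (0:ℝ)) + t • ((0:Y), (1:ℝ)) := by
      simp [Prod.ext_iff]
    rw [hx, map_add, map_smul, smul_eq_mul]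
    simp [hg_def, hc_def, mul_comm]
  -- consequences of separation
  have hA' : ∀ u ∈ U, ∀ t < (0:ℝ), g u + c * t < s := by
    intro u hu t ht
    have := hfA (u, t) ⟨hu, ht⟩
    rwa [hf] at this
  have hB' : ∀ v ∈ V, ∀ t, π v - π y ≤ t → s ≤ g v + c * t := by
    intro v hv t ht
    have := hfB (v, t) ⟨hv, ht⟩
    rwa [hf] at this
  obtain ⟨w, hwU, hwV⟩ := hUV
  -- c ≥ 0
  have hc0 : 0 ≤ c := by
    by_contra hc
    push_neg at hc
    have h1 := hA' w hwU (-1) (by norm_num)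
    have hpos : 0 < s - g w := by linarith
    have ht : (s - g w) / c < 0 := div_neg_of_pos_of_neg hpos hc
    have h2 := hA' w hwU _ ht
    rw [mul_div_cancel₀ _ (ne_of_lt hc)] at h2
    linarith
  -- g u ≤ s for u ∈ U
  have hgu : ∀ u ∈ U, g u ≤ s := by
    intro u hu
    refine le_of_forall_pos_lt_add fun ε hε => ?_
    have hden : (0:ℝ) < c + 1 := by linarith
    have ht : -(ε / (c + 1)) < 0 := by
      have : 0 < ε / (c + 1) := div_pos hε hden
      linarith
    have h := hA' u hu _ ht
    have h2 : c * (ε / (c + 1)) ≤ ε := by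
      rw [mul_div_assoc', div_le_iff₀ hden]
      nlinarith
    linarith
  -- c ≠ 0
  have hcpos : 0 < c := by
    rcases lt_or_eq_of_le hc0 with h | h
    · exact h
    · exfalso
      have h1 := hA' w hwU (-1) (by norm_num)
      have h2 := hB' w hwV (π w - π y) le_rfl
      have h3 := hπ w ⟨hwU, hwV⟩
      rw [← h] at h1 h2
      nlinarith
  -- g y = s
  have hgy_le : g y ≤ s := by
    have hcl : closure U ⊆ g ⁻¹' Set.Iic s :=
      closure_minimal (fun u hu => hgu u hu) (isClosed_Iic.preimage g.continuous)
    exact hcl hy.2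
  have hgy_ge : s ≤ g y := by
    have := hB' y hy.1 0 (by simp)
    simpa using this
  have hgy : g y = s := le_antisymm hgy_le hgy_ge
  -- build the functionals
  refine ⟨((-c⁻¹) • g : Y →L[ℝ] ℝ), π - ((-c⁻¹) • g : Y →L[ℝ] ℝ), ((-c⁻¹) • g).continuous, ?_, ?_, ?_⟩
  · intro u hu
    simp only [ContinuousLinearMap.coe_coe, ContinuousLinearMap.smul_apply, smul_eq_mul]
    have := hgu u hu
    have hcinv : 0 < c⁻¹ := inv_pos.mpr hcpos
    nlinarith
  · intro v hv
    simp only [LinearMap.sub_apply, ContinuousLinearMap.coe_coe,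
      ContinuousLinearMap.smul_apply, smul_eq_mul]
    have h := hB' v hv (π v - π y) le_rfl
    have hcinv : 0 < c⁻¹ := inv_pos.mpr hcpos
    have hcc : c⁻¹ * c = 1 := inv_mul_cancel₀ (ne_of_gt hcpos)
    have h2 := mul_le_mul_of_nonneg_left h hcinv.le
    rw [mul_add, ← mul_assoc, hcc, one_mul] at h2
    rw [hgy]
    linarith
  · ext x
    simp
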